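/- Let λ be a σ-finite measure on X whose action satisfies λR = λ.withDensity W for a nonnegative measurable W. Then the following are equivalent: (i) W is a σ-coboundary, i.e. there exists a nonnegative measurable q : X → ℝ with q > 0 λ-almost everywhere and W · (q ∘ σ) = q λ-almost everywhere; (ii) there exists a σ-finite measure λ₁ equivalent to λ (λ₁ ≪ λ and λ ≪ λ₁) which is R-invariant, i.e. ∫ R f dλ₁ = ∫ f dλ₁ for every nonnegative measurable f : X → ℝ. -/
import Mathlib


open MeasureTheory
open scoped ENNReal

/-- `W = d(λR)/dλ` is a `σ`-coboundary iff there is a `σ`-finite measure `λ₁`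
equivalent to `λ` which is `R`-invariant. -/
theorem stmt_4 {X : Type*} [MeasurableSpace X] (σ : X → X)
    (hσ : Measurable σ) (hσsurj : Function.Surjective σ)
    (R : (X → ℝ) → (X → ℝ))
    (hadd : ∀ f g : X → ℝ, R (f + g) = R f + R g)
    (hsmul : ∀ (c : ℝ) (f : X → ℝ), R (c • f) = c • R f)
    (hmeas : ∀ f : X → ℝ, Measurable f → Measurable (R f))
    (hpos : ∀ f : X → ℝ, 0 ≤ f → 0 ≤ R f)
    (hpull : ∀ f g : X → ℝ, Measurable f → Measurable g →
      R ((f ∘ σ) * g) = f * R g)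
    (lam : Measure X) [SigmaFinite lam]
    (W : X → ℝ) (hW : Measurable W) (hW0 : 0 ≤ W)
    (hRW : ∀ f : X → ℝ, Measurable f → 0 ≤ f →
      ∫⁻ x, ENNReal.ofReal (R f x) ∂lam = ∫⁻ x, ENNReal.ofReal (f x * W x) ∂lam) :
    (∃ q : X → ℝ, Measurable q ∧ 0 ≤ q ∧ (∀ᵐ x ∂lam, 0 < q x) ∧
      (fun x => W x * q (σ x)) =ᵐ[lam] q) ↔
    (∃ lam₁ : Measure X, SigmaFinite lam₁ ∧ lam₁ ≪ lam ∧ lam ≪ lam₁ ∧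
      ∀ f : X → ℝ, Measurable f → 0 ≤ f →
        ∫⁻ x, ENNReal.ofReal (R f x) ∂lam₁ = ∫⁻ x, ENNReal.ofReal (f x) ∂lam₁) := by
  -- Key identity from the pull-out property and `hRW`
  have key : ∀ q f : X → ℝ, Measurable q → 0 ≤ q → Measurable f → 0 ≤ f →
      ∫⁻ x, ENNReal.ofReal (q x) * ENNReal.ofReal (R f x) ∂lam
        = ∫⁻ x, ENNReal.ofReal (f x) *
            (ENNReal.ofReal (W x) * ENNReal.ofReal (q (σ x))) ∂lam := by
    intro q f hq hq0 hf hf0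
    have hmg : Measurable ((q ∘ σ) * f) := (hq.comp hσ).mul hf
    have hg0 : 0 ≤ (q ∘ σ) * f := fun x => mul_nonneg (hq0 _) (hf0 _)
    have h := hRW _ hmg hg0
    rw [hpull q f hq hf] at h
    calc ∫⁻ x, ENNReal.ofReal (q x) * ENNReal.ofReal (R f x) ∂lam
        = ∫⁻ x, ENNReal.ofReal ((q * R f) x) ∂lam := by
          refine lintegral_congr fun x => ?_
          simp [ENNReal.ofReal_mul (hq0 x)]
      _ = ∫⁻ x, ENNReal.ofReal (((q ∘ σ) * f) x * W x) ∂lam := h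
      _ = ∫⁻ x, ENNReal.ofReal (f x) *
            (ENNReal.ofReal (W x) * ENNReal.ofReal (q (σ x))) ∂lam := by
          refine lintegral_congr fun x => ?_
          simp only [Pi.mul_apply, Function.comp_apply]
          rw [ENNReal.ofReal_mul (mul_nonneg (hq0 _) (hf0 _)), ENNReal.ofReal_mul (hq0 _)]
          ring
  constructor
  · -- coboundary → invariant equivalent measure
    rintro ⟨q, hq, hq0, hqpos, hcob⟩
    set Q : X → ℝ≥0∞ := fun x => ENNReal.ofReal (q x) with hQ
    refine ⟨lam.withDensity Q, inferInstance, withDensity_absolutelyContinuous _ _, ?_, ?_⟩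
    · refine withDensity_absolutelyContinuous' hq.ennreal_ofReal.aemeasurable ?_
      filter_upwards [hqpos] with x hx
      exact (ENNReal.ofReal_pos.mpr hx).ne'
    · intro f hf hf0
      have hRf0 : 0 ≤ R f := hpos f hf0
      rw [lintegral_withDensity_eq_lintegral_mul lam hq.ennreal_ofReal
        (hmeas f hf).ennreal_ofReal,
        lintegral_withDensity_eq_lintegral_mul lam hq.ennreal_ofReal hf.ennreal_ofReal]
      have h1 : ∫⁻ x, (Q * fun x => ENNReal.ofReal (R f x)) x ∂lam
          = ∫⁻ x, ENNReal.ofReal (f x) *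
              (ENNReal.ofReal (W x) * ENNReal.ofReal (q (σ x))) ∂lam :=
        key q f hq hq0 hf hf0
      rw [h1]
      refine lintegral_congr_ae ?_
      filter_upwards [hcob] with x hx
      simp only [Pi.mul_apply, hQ]
      rw [← ENNReal.ofReal_mul (hW0 x), hx, mul_comm]
  · -- invariant equivalent measure → coboundary
    rintro ⟨lam₁, hsf, h1, h2, hinv⟩
    set ρ : X → ℝ≥0∞ := lam₁.rnDeriv lam with hρ
    have hρm : Measurable ρ := Measure.measurable_rnDeriv _ _
    set q : X → ℝ := fun x => (ρ x).toReal with hqdef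
    have hq : Measurable q := hρm.ennreal_toReal
    have hq0 : 0 ≤ q := fun x => ENNReal.toReal_nonneg
    have hfin : ∀ᵐ x ∂lam, ρ x < ∞ := Measure.rnDeriv_lt_top _ _
    have hQρ : (fun x => ENNReal.ofReal (q x)) =ᵐ[lam] ρ := by
      filter_upwards [hfin] with x hx
      simp [hqdef, ENNReal.ofReal_toReal hx.ne]
    have hwd : lam.withDensity ρ = lam₁ := Measure.withDensity_rnDeriv_eq _ _ h1
    refine ⟨q, hq, hq0, ?_, ?_⟩
    · filter_upwards [h2.ae_le (Measure.rnDeriv_pos h1), hfin] with x hx hx'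
      exact ENNReal.toReal_pos hx.ne' hx'.ne
    · -- the cocycle identity, via testing against indicators
      have main : ∀ s : Set X, MeasurableSet s →
          ∫⁻ x in s, ENNReal.ofReal (W x * q (σ x)) ∂lam
            = ∫⁻ x in s, ENNReal.ofReal (q x) ∂lam := by
        intro s hs
        set f : X → ℝ := s.indicator (fun _ => (1:ℝ)) with hfdef
        have hf : Measurable f := measurable_const.indicator hs
        have hf0 : 0 ≤ f := Set.indicator_nonneg (fun _ _ => zero_le_one)
        have hind : ∀ g : X → ℝ≥0∞, (fun x => ENNReal.ofReal (f x) * g x) = s.indicator g := by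
          intro g
          funext x
          by_cases hx : x ∈ s <;> simp [hfdef, hx]
        -- compute ∫ R f dλ₁
        have hB : ∫⁻ x, ENNReal.ofReal (R f x) ∂lam₁
            = ∫⁻ x in s, ENNReal.ofReal (W x * q (σ x)) ∂lam := by
          rw [← hwd, lintegral_withDensity_eq_lintegral_mul lam hρm (hmeas f hf).ennreal_ofReal]
          have : ∫⁻ x, (ρ * fun x => ENNReal.ofReal (R f x)) x ∂lam
              = ∫⁻ x, ENNReal.ofReal (q x) * ENNReal.ofReal (R f x) ∂lam := by
            refine lintegral_congr_ae ?_
            filter_upwards [hQρ] with x hx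
            simp [hx]
          rw [this, key q f hq hq0 hf hf0]
          have : (fun x => ENNReal.ofReal (f x) *
              (ENNReal.ofReal (W x) * ENNReal.ofReal (q (σ x))))
              = s.indicator (fun x => ENNReal.ofReal (W x * q (σ x))) := by
            rw [← hind]
            funext x
            rw [← ENNReal.ofReal_mul (hW0 x)]
          rw [this]; exact lintegral_indicator hs _
        -- compute ∫ f dλ₁
        have hC : ∫⁻ x, ENNReal.ofReal (f x) ∂lam₁
            = ∫⁻ x in s, ENNReal.ofReal (q x) ∂lam := by
          rw [← hwd, lintegral_withDensity_eq_lintegral_mul lam hρm hf.ennreal_ofReal]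
          have : ∫⁻ x, (ρ * fun x => ENNReal.ofReal (f x)) x ∂lam
              = ∫⁻ x, ENNReal.ofReal (f x) * ENNReal.ofReal (q x) ∂lam := by
            refine lintegral_congr_ae ?_
            filter_upwards [hQρ] with x hx
            simp [← hx, mul_comm]
          rw [this, hind]; exact lintegral_indicator hs _
        rw [← hB, ← hC]
        exact hinv f hf hf0
      have : (fun x => ENNReal.ofReal (W x * q (σ x)))
          =ᵐ[lam] (fun x => ENNReal.ofReal (q x)) :=
        ae_eq_of_forall_setLIntegral_eq_of_sigmaFinite
          (hW.mul (hq.comp hσ)).ennreal_ofReal hq.ennreal_ofReal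
          (fun s hs _ => main s hs)
      filter_upwards [this] with x hx
      have h0 : 0 ≤ W x * q (σ x) := mul_nonneg (hW0 x) (hq0 _)
      exact ENNReal.ofReal_eq_ofReal_iff h0 (hq0 x) |>.mp hx
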